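/- arXiv:2505.15602 — 2 statements merged into one kernel-verified Lean document; each statement's English description precedes it below -/
import Mathlib

section
/- Let c₁, c₂ > 0, ζ ≥ 0, Λ₂ ≥ 0 and T > 0. The ordinary differential equation h'(t) = h(t)² / (2c₁ + h(t) ζ Λ₂) on [0,T] with terminal condition h(T) = 2c₂ admits a unique solution, and this solution satisfies h(t) > 0 for all t ∈ [0,T], and h is nondecreasing on [0,T]. -/
open Set

/-- Well-posedness of the Riccati-type ODE h' = h²/(2c₁ + hζΛ₂) on [0,T] with terminal
condition h(T) = 2c₂: existence, uniqueness, positivity and monotonicity. -/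
theorem stmt_3 (c₁ c₂ ζ Λ₂ T : ℝ) (hc₁ : 0 < c₁) (hc₂ : 0 < c₂) (hζ : 0 ≤ ζ)
    (hΛ₂ : 0 ≤ Λ₂) (hT : 0 < T) :
    ∃ h : ℝ → ℝ,
      (∀ t ∈ Icc (0 : ℝ) T,
          HasDerivWithinAt h (h t ^ 2 / (2 * c₁ + h t * ζ * Λ₂)) (Icc 0 T) t)
      ∧ h T = 2 * c₂
      ∧ (∀ t ∈ Icc (0 : ℝ) T, 0 < h t)
      ∧ MonotoneOn h (Icc 0 T)
      ∧ ∀ h₂ : ℝ → ℝ,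
          (∀ t ∈ Icc (0 : ℝ) T,
              HasDerivWithinAt h₂ (h₂ t ^ 2 / (2 * c₁ + h₂ t * ζ * Λ₂)) (Icc 0 T) t) →
          h₂ T = 2 * c₂ → ∀ t ∈ Icc (0 : ℝ) T, h₂ t = h t := by
  have hc₂' : (0:ℝ) < 2*c₂ := by linarith
  set K := ζ * Λ₂ with hKdef
  have hK : 0 ≤ K := mul_nonneg hζ hΛ₂
  set G : ℝ → ℝ := fun y => K * Real.log y - 2*c₁/y with hGdef
  -- derivative of G
  have hGd : ∀ y : ℝ, 0 < y → HasDerivAt G ((2*c₁ + K*y)/y^2) y := by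
    intro y hy
    have h1 : HasDerivAt (fun y : ℝ => K * Real.log y) (K * y⁻¹) y :=
      (Real.hasDerivAt_log hy.ne').const_mul K
    have h2 : HasDerivAt (fun y : ℝ => 2*c₁/y) (2*c₁ * -(y^2)⁻¹) y := by
      simpa [div_eq_mul_inv] using (hasDerivAt_inv hy.ne').const_mul (2*c₁)
    have h3 := h1.sub h2
    have e : (2*c₁ + K*y)/y^2 = K * y⁻¹ - 2*c₁ * -(y^2)⁻¹ := by
      field_simp
      ring
    rw [e]; exact h3
  have hGc : ContinuousOn G (Ioi 0) :=
    fun y hy => (hGd y hy).continuousAt.continuousWithinAt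
  have hGm : StrictMonoOn G (Ioi 0) := by
    apply strictMonoOn_of_deriv_pos (convex_Ioi 0) hGc
    intro x hx
    rw [interior_Ioi] at hx
    rw [(hGd x hx).deriv]
    have hx' : (0:ℝ) < x := hx
    exact div_pos (by nlinarith) (by positivity)
  set C := G (2*c₂) with hCdef
  have hCval : C = K * Real.log (2*c₂) - c₁/c₂ := by
    have h1 : 2*c₁/(2*c₂) = c₁/c₂ := mul_div_mul_left c₁ c₂ two_ne_zero
    rw [hCdef]
    show K * Real.log (2*c₂) - 2*c₁/(2*c₂) = K * Real.log (2*c₂) - c₁/c₂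
    rw [h1]
  -- G takes arbitrarily small values near 0
  have hlow : ∀ b : ℝ, ∃ z : ℝ, 0 < z ∧ z ≤ 2*c₂ ∧ G z ≤ b := by
    intro b
    set M := max (K * Real.log (2*c₂) - b) 1 with hM
    have hM1 : (1:ℝ) ≤ M := le_max_right _ _
    have hM0 : (0:ℝ) < M := by linarith
    set z := min (2*c₂) (2*c₁/M) with hz
    have hz0 : 0 < z := lt_min hc₂' (by positivity)
    have hz1 : z ≤ 2*c₂ := min_le_left _ _
    have hz2 : z ≤ 2*c₁/M := min_le_right _ _
    refine ⟨z, hz0, hz1, ?_⟩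
    have hlog : Real.log z ≤ Real.log (2*c₂) := Real.log_le_log hz0 hz1
    have hzM : M ≤ 2*c₁/z := by
      rw [le_div_iff₀ hz0]
      calc M * z ≤ M * (2*c₁/M) := by
            exact mul_le_mul_of_nonneg_left hz2 hM0.le
        _ = 2*c₁ := by field_simp
    have hMb : K * Real.log (2*c₂) - b ≤ M := le_max_left _ _
    have hKlog : K * Real.log z ≤ K * Real.log (2*c₂) :=
      mul_le_mul_of_nonneg_left hlog hK
    show K * Real.log z - 2*c₁/z ≤ b
    linarith
  -- G takes values ≥ b for b < K log(2c₂)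
  have hup : ∀ b : ℝ, b < K * Real.log (2*c₂) → ∃ y : ℝ, 2*c₂ ≤ y ∧ b ≤ G y := by
    intro b hb
    set M := K * Real.log (2*c₂) - b with hMdef
    have hM0 : 0 < M := by linarith
    set y := max (2*c₂) (2*c₁/M) with hy
    have hy1 : 2*c₂ ≤ y := le_max_left _ _
    have hy0 : 0 < y := lt_of_lt_of_le hc₂' hy1
    refine ⟨y, hy1, ?_⟩
    have hlog : Real.log (2*c₂) ≤ Real.log y := Real.log_le_log hc₂' hy1
    have hKlog : K * Real.log (2*c₂) ≤ K * Real.log y :=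
      mul_le_mul_of_nonneg_left hlog hK
    have hyM : 2*c₁/M ≤ y := le_max_right _ _
    have h2c : 2*c₁/y ≤ M := by
      rw [div_le_iff₀ hy0]
      calc 2*c₁ = M * (2*c₁/M) := by field_simp
        _ ≤ M * y := mul_le_mul_of_nonneg_left hyM hM0.le
    show b ≤ K * Real.log y - 2*c₁/y
    linarith
  have hδ : 0 < c₁/c₂ := by positivity
  -- solvability of G y = t - T + C for t < T + c₁/c₂
  have hex : ∀ t : ℝ, t < T + c₁/c₂ → ∃ y ∈ Ioi (0:ℝ), G y = t - T + C := by
    intro t ht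
    obtain ⟨z, hz0, hz1, hz2⟩ := hlow (t - T + C)
    obtain ⟨y, hy1, hy2⟩ := hup (t - T + C) (by rw [hCval]; linarith)
    have hzy : z ≤ y := hz1.trans hy1
    have hsub : Icc z y ⊆ Ioi (0:ℝ) := fun x hx => lt_of_lt_of_le hz0 hx.1
    obtain ⟨x, hx, hGx⟩ := intermediate_value_Icc hzy (hGc.mono hsub) ⟨hz2, hy2⟩
    exact ⟨x, hsub hx, hGx⟩
  set h : ℝ → ℝ := fun t => Function.invFunOn G (Ioi 0) (t - T + C) with hhdef
  have hmem : ∀ t : ℝ, t < T + c₁/c₂ → 0 < h t ∧ G (h t) = t - T + C := by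
    intro t ht
    obtain ⟨y, hy, hGy⟩ := hex t ht
    exact ⟨Function.invFunOn_mem ⟨y, hy, hGy⟩, Function.invFunOn_eq ⟨y, hy, hGy⟩⟩
  have hltd : ∀ t : ℝ, t ≤ T → t < T + c₁/c₂ := fun t ht => by linarith
  have hhT : h T = 2*c₂ := by
    obtain ⟨hp, hG⟩ := hmem T (hltd T le_rfl)
    refine hGm.injOn (mem_Ioi.2 hp) (mem_Ioi.2 hc₂') ?_
    rw [hG, ← hCdef]; ring
  -- continuity of h on (-∞, T]
  have hcont : ∀ t₀ : ℝ, t₀ ≤ T → ContinuousAt h t₀ := by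
    intro t₀ ht₀
    obtain ⟨hp, hGp⟩ := hmem t₀ (hltd _ ht₀)
    rw [Metric.continuousAt_iff]
    intro ε hε
    set ε' := min (ε/2) (h t₀ / 2) with hε'def
    have hε'0 : 0 < ε' := lt_min (by linarith) (by linarith)
    have hε'1 : ε' ≤ ε/2 := min_le_left _ _
    have hε'2 : ε' ≤ h t₀ / 2 := min_le_right _ _
    have hpm : 0 < h t₀ - ε' := by linarith
    have ha₁ : G (h t₀ - ε') < t₀ - T + C := by
      rw [← hGp]
      exact hGm (mem_Ioi.2 hpm) (mem_Ioi.2 hp) (by linarith)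
    have ha₂ : t₀ - T + C < G (h t₀ + ε') := by
      rw [← hGp]
      exact hGm (mem_Ioi.2 hp) (mem_Ioi.2 (by linarith)) (by linarith)
    refine ⟨min (min ((t₀ - T + C) - G (h t₀ - ε')) (G (h t₀ + ε') - (t₀ - T + C)))
      (T + c₁/c₂ - t₀), lt_min (lt_min (by linarith) (by linarith)) (by linarith), ?_⟩
    intro x hx
    rw [Real.dist_eq] at hx
    have hx1 : |x - t₀| < (t₀ - T + C) - G (h t₀ - ε') :=
      lt_of_lt_of_le hx ((min_le_left _ _).trans (min_le_left _ _))
    have hx2 : |x - t₀| < G (h t₀ + ε') - (t₀ - T + C) :=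
      lt_of_lt_of_le hx ((min_le_left _ _).trans (min_le_right _ _))
    have hx3 : |x - t₀| < T + c₁/c₂ - t₀ := lt_of_lt_of_le hx (min_le_right _ _)
    obtain ⟨hxa, hxb⟩ := abs_lt.1 hx1
    obtain ⟨hxc, hxd⟩ := abs_lt.1 hx2
    obtain ⟨hxe, hxf⟩ := abs_lt.1 hx3
    obtain ⟨hq, hGq⟩ := hmem x (by linarith)
    have h1 : G (h t₀ - ε') < G (h x) := by rw [hGq]; linarith
    have h2 : G (h x) < G (h t₀ + ε') := by rw [hGq]; linarith
    have h1' : h t₀ - ε' < h x :=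
      (hGm.lt_iff_lt (mem_Ioi.2 hpm) (mem_Ioi.2 hq)).1 h1
    have h2' : h x < h t₀ + ε' :=
      (hGm.lt_iff_lt (mem_Ioi.2 hq) (mem_Ioi.2 (by linarith))).1 h2
    rw [Real.dist_eq]
    rw [abs_lt]
    constructor <;> linarith
  -- derivative of h
  have hderiv : ∀ t₀ ∈ Icc (0:ℝ) T,
      HasDerivAt h ((h t₀)^2/(2*c₁ + h t₀ * ζ * Λ₂)) t₀ := by
    intro t₀ ht₀
    obtain ⟨hp, hGp⟩ := hmem t₀ (hltd _ ht₀.2)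
    have hden : 0 < 2*c₁ + K * h t₀ := by nlinarith
    have hf : HasDerivAt (fun y => G y + (T - C)) ((2*c₁ + K * h t₀)/(h t₀)^2) (h t₀) :=
      (hGd _ hp).add_const _
    have hf' : ((2*c₁ + K * h t₀)/(h t₀)^2) ≠ 0 := ne_of_gt (div_pos hden (by positivity))
    have hfg : ∀ᶠ x in nhds t₀, (fun y => G y + (T - C)) (h x) = x := by
      filter_upwards [Iio_mem_nhds (show t₀ < T + c₁/c₂ by linarith [ht₀.2])] with x hx
      have hGx := (hmem x hx).2
      show G (h x) + (T - C) = x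
      rw [hGx]; ring
    have hd := HasDerivAt.of_local_left_inverse (hcont t₀ ht₀.2) hf hf' hfg
    have e : (h t₀)^2/(2*c₁ + h t₀ * ζ * Λ₂) = ((2*c₁ + K * h t₀)/(h t₀)^2)⁻¹ := by
      rw [inv_div, hKdef]
      ring_nf
    rw [e]; exact hd
  -- the constancy lemma: any positive solution satisfies G (h₂ t) - t = const
  have key : ∀ h₂ : ℝ → ℝ,
      (∀ t ∈ Icc (0:ℝ) T,
        HasDerivWithinAt h₂ (h₂ t ^ 2 / (2 * c₁ + h₂ t * ζ * Λ₂)) (Icc 0 T) t) →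
      ∀ a ∈ Icc (0:ℝ) T, (∀ s ∈ Icc a T, 0 < h₂ s) →
      ∀ t ∈ Icc a T, G (h₂ t) - t = G (h₂ T) - T := by
    intro h₂ hode a ha hpos t ht
    have hsub : Icc a T ⊆ Icc 0 T := Icc_subset_Icc ha.1 le_rfl
    have hcont₂ : ContinuousOn h₂ (Icc a T) :=
      fun s hs => ((hode s (hsub hs)).continuousWithinAt).mono hsub
    have hcφ : ContinuousOn (fun s => G (h₂ s) - s) (Icc a T) := by
      refine ContinuousOn.sub ?_ continuous_id.continuousOn
      exact hGc.comp hcont₂ (fun s hs => mem_Ioi.2 (hpos s hs))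
    have hdφ : ∀ x ∈ Ico a T, HasDerivWithinAt (fun s => G (h₂ s) - s) 0 (Ici x) x := by
      intro x hx
      have hx' : x ∈ Icc (0:ℝ) T := ⟨ha.1.trans hx.1, hx.2.le⟩
      have hpx : 0 < h₂ x := hpos x ⟨hx.1, hx.2.le⟩
      have hmemIci : Icc (0:ℝ) T ∈ nhdsWithin x (Ici x) :=
        Filter.mem_of_superset (Icc_mem_nhdsGE_of_mem ⟨le_rfl, hx.2⟩)
          (Icc_subset_Icc hx'.1 le_rfl)
      have hd2 : HasDerivWithinAt h₂ (h₂ x ^ 2 / (2 * c₁ + h₂ x * ζ * Λ₂)) (Ici x) x :=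
        (hode x hx').mono_of_mem_nhdsWithin hmemIci
      have hden : 0 < 2 * c₁ + h₂ x * ζ * Λ₂ := by nlinarith [mul_nonneg (mul_nonneg hpx.le hζ) hΛ₂]
      have hchain := (hGd (h₂ x) hpx).comp_hasDerivWithinAt x hd2
      have hone : ((2*c₁ + K*(h₂ x))/(h₂ x)^2 * (h₂ x ^ 2 / (2 * c₁ + h₂ x * ζ * Λ₂))) = 1 := by
        rw [hKdef]
        rw [div_mul_div_comm]
        rw [div_eq_one_iff_eq (ne_of_gt (mul_pos (pow_pos hpx 2) hden))]
        ring
      rw [hone] at hchain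
      have := hchain.sub (hasDerivWithinAt_id x (Ici x))
      rw [sub_self] at this; exact this
    have hconst := constant_of_has_deriv_right_zero hcφ hdφ
    have h1 := hconst t ht
    have h2 := hconst T (right_mem_Icc.2 ha.2)
    linarith
  refine ⟨h, fun t ht => (hderiv t ht).hasDerivWithinAt, hhT,
    fun t ht => (hmem t (hltd _ ht.2)).1, ?_, ?_⟩
  · -- monotone
    intro s hs t ht hst
    have h1 := (hmem s (hltd _ hs.2)).2
    have h2 := (hmem t (hltd _ ht.2)).2
    refine (hGm.le_iff_le (mem_Ioi.2 (hmem s (hltd _ hs.2)).1)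
      (mem_Ioi.2 (hmem t (hltd _ ht.2)).1)).1 ?_
    rw [h1, h2]; linarith
  · -- uniqueness
    intro h₂ hode hT2
    have hpos₂ : ∀ t ∈ Icc (0:ℝ) T, 0 < h₂ t := by
      by_contra hcon
      push_neg at hcon
      obtain ⟨t₁, ht₁, ht₁'⟩ := hcon
      have hcont₂ : ContinuousOn h₂ (Icc 0 T) := fun s hs => (hode s hs).continuousWithinAt
      set S := {t ∈ Icc (0:ℝ) T | h₂ t ≤ 0} with hSdef
      have hSne : S.Nonempty := ⟨t₁, ht₁, ht₁'⟩
      have hSclosed : IsClosed S := by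
        have hSeq : S = Icc 0 T ∩ h₂ ⁻¹' (Iic 0) := by
          ext x; simp [hSdef]
        rw [hSeq]
        exact hcont₂.preimage_isClosed_of_isClosed isClosed_Icc isClosed_Iic
      have hScpt : IsCompact S := isCompact_Icc.of_isClosed_subset hSclosed (fun x hx => hx.1)
      set t₀ := sSup S with ht₀def
      have ht₀S : t₀ ∈ S := hScpt.sSup_mem hSne
      have ht₀T : t₀ < T := by
        rcases lt_or_eq_of_le ht₀S.1.2 with hlt | heq
        · exact hlt
        · exfalso; have := ht₀S.2; rw [heq, hT2] at this; linarith
      have hposIoc : ∀ s ∈ Ioc t₀ T, 0 < h₂ s := by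
        intro s hs
        by_contra hns
        push_neg at hns
        have hsS : s ∈ S := ⟨⟨ht₀S.1.1.trans hs.1.le, hs.2⟩, hns⟩
        have := le_csSup hScpt.bddAbove hsS
        have := hs.1
        linarith
      obtain ⟨z, hz0, hz1, hz2⟩ := hlow (t₀ - T + C)
      have hcw : ContinuousWithinAt h₂ (Icc 0 T) t₀ := hcont₂ t₀ ht₀S.1
      have hev : ∀ᶠ x in nhdsWithin t₀ (Icc (0:ℝ) T), h₂ x < z :=
        hcw (Iio_mem_nhds (lt_of_le_of_lt ht₀S.2 hz0))
      have hclos : t₀ ∈ closure (Ioc t₀ T) := by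
        rw [closure_Ioc ht₀T.ne]
        exact ⟨le_rfl, ht₀T.le⟩
      have hne : (nhdsWithin t₀ (Ioc t₀ T)).NeBot := mem_closure_iff_nhdsWithin_neBot.1 hclos
      have hsub' : Ioc t₀ T ⊆ Icc (0:ℝ) T :=
        fun x hx => ⟨ht₀S.1.1.trans hx.1.le, hx.2⟩
      have hev' : ∀ᶠ x in nhdsWithin t₀ (Ioc t₀ T), h₂ x < z :=
        (nhdsWithin_mono t₀ hsub') hev
      obtain ⟨a, haz, ha2⟩ := (hev'.and (eventually_mem_nhdsWithin)).exists
      have hga := key h₂ hode a ⟨ht₀S.1.1.trans ha2.1.le, ha2.2⟩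
        (fun s hs => hposIoc s ⟨lt_of_lt_of_le ha2.1 hs.1, hs.2⟩)
        a (left_mem_Icc.2 ha2.2)
      rw [hT2, ← hCdef] at hga
      have hlt2 : G (h₂ a) < G z := hGm (mem_Ioi.2 (hposIoc a ha2)) (mem_Ioi.2 hz0) haz
      have := ha2.1
      linarith
    intro t ht
    have hga := key h₂ hode 0 (left_mem_Icc.2 hT.le) (fun s hs => hpos₂ s hs) t ht
    rw [hT2, ← hCdef] at hga
    obtain ⟨hq, hGq⟩ := hmem t (hltd _ ht.2)
    refine hGm.injOn (mem_Ioi.2 (hpos₂ t ht)) (mem_Ioi.2 hq) ?_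
    rw [hGq]; linarith
end

section
/- Let T > 0, c₁, c₂ > 0, ζ, Λ₁ ≥ 0, Λ₂ ≥ 0, let Σ be a d×d matrix, and suppose h : [0,T] → (0,∞) is C¹ and solves h'(t) = h(t)²/(2c₁ + h(t)ζΛ₂) with h(T) = 2c₂. Define f(t) = (1/2)(Tr[ΣΣᵀ] + Λ₁ζ) ∫_t^T h(s) ds and V(t,x) = (1/2)h(t)‖x‖² + f(t). Then V satisfies the HJB equation 0 = ∂_t V(t,x) + (1/2)Tr[ΣΣᵀ∇²_x V(t,x)] + inf_{a∈ℝ^d} { c₁‖a‖² + (Λ₁ + Λ₂‖a‖²)(h(t)/2)ζ + aᵀ∇_x V(t,x) } − Λ₁(h(t)/2)ζ·0, i.e. 0 = ∂_t V + (1/2)Tr[ΣΣᵀ∇²_x V] + inf_a { c₁‖a‖² + (Λ₁ + Λ₂‖a‖²)(h(t)ζ/2) + aᵀ h(t)x }, for all (t,x) ∈ [0,T) × ℝ^d, together with the terminal condition V(T,x) = c₂‖x‖². -/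
open Set MeasureTheory RealInnerProductSpace

private lemma inf_quad_aux {E : Type*} [NormedAddCommGroup E] [InnerProductSpace ℝ E]
    (k m : ℝ) (hk : 0 < k) (b : E) :
    ⨅ a : E, (k * ‖a + b‖ ^ 2 + m) = m := by
  apply le_antisymm
  · have := ciInf_le (f := fun a : E => k * ‖a + b‖ ^ 2 + m)
      ⟨m, by rintro y ⟨a, rfl⟩; dsimp only; nlinarith [mul_nonneg hk.le (sq_nonneg ‖a+b‖)]⟩ (-b)
    simpa using this
  · exact le_ciInf fun a => by nlinarith [mul_nonneg hk.le (sq_nonneg ‖a+b‖)]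

/-- Verification: the quadratic ansatz V(t,x) = (1/2)h(t)‖x‖² + f(t) solves the HJB equation of
the jump-LQR problem with controlled intensity, with terminal condition V(T,x) = c₂‖x‖². -/
theorem stmt_7 (d : ℕ) (T c₁ c₂ ζ Λ₁ Λ₂ : ℝ) (hT : 0 < T) (hc₁ : 0 < c₁) (hc₂ : 0 < c₂)
    (hζ : 0 ≤ ζ) (hΛ₁ : 0 ≤ Λ₁) (hΛ₂ : 0 ≤ Λ₂)
    (Sig : Matrix (Fin d) (Fin d) ℝ)
    (h : ℝ → ℝ) (hC1 : ContDiff ℝ 1 h)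
    (hpos : ∀ t ∈ Icc (0 : ℝ) T, 0 < h t)
    (hODE : ∀ t ∈ Icc (0 : ℝ) T,
        HasDerivAt h (h t ^ 2 / (2 * c₁ + h t * ζ * Λ₂)) t)
    (hterm : h T = 2 * c₂)
    (f : ℝ → ℝ)
    (hf : f = fun t => (1 / 2) * ((Sig * Sig.transpose).trace + Λ₁ * ζ) * ∫ s in t..T, h s)
    (V : ℝ → EuclideanSpace ℝ (Fin d) → ℝ)
    (hV : V = fun t x => (1 / 2) * h t * ‖x‖ ^ 2 + f t) :
    (∀ t ∈ Ico (0 : ℝ) T, ∀ x : EuclideanSpace ℝ (Fin d),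
      0 = deriv (fun s => V s x) t
        + (1 / 2) * ∑ i : Fin d, ∑ j : Fin d, (Sig * Sig.transpose) i j *
            (fderiv ℝ (fun y => fderiv ℝ (V t) y (EuclideanSpace.single j 1)) x)
              (EuclideanSpace.single i 1)
        + ⨅ a : EuclideanSpace ℝ (Fin d),
            (c₁ * ‖a‖ ^ 2 + (Λ₁ + Λ₂ * ‖a‖ ^ 2) * (h t * ζ / 2)
              + inner ℝ a (gradient (V t) x)))
    ∧ ∀ x : EuclideanSpace ℝ (Fin d), V T x = c₂ * ‖x‖ ^ 2 := by
  subst hf hV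
  set tr : ℝ := (Sig * Sig.transpose).trace with htr
  constructor
  · intro t ht x
    have htIcc : t ∈ Icc (0 : ℝ) T := Ico_subset_Icc_self ht
    have hht : 0 < h t := hpos t htIcc
    -- notation
    set C₀ : ℝ := (1 / 2) * (tr + Λ₁ * ζ) with hC₀
    -- Step A: fderiv of V t
    have hfdAt : ∀ y : EuclideanSpace ℝ (Fin d), HasFDerivAt (fun x : EuclideanSpace ℝ (Fin d) => (1 / 2) * h t * ‖x‖ ^ 2 + C₀ * ∫ s in t..T, h s)
        (((1/2) * h t) • (2 • (innerSL ℝ y))) y := by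
      intro y
      simpa [mul_assoc] using
        (((hasFDerivAt_id y).norm_sq).const_mul ((1/2) * h t)).add_const (C₀ * ∫ s in t..T, h s)
    have hfd : ∀ y v : EuclideanSpace ℝ (Fin d),
        fderiv ℝ (fun x : EuclideanSpace ℝ (Fin d) => (1 / 2) * h t * ‖x‖ ^ 2 + C₀ * ∫ s in t..T, h s) y v
          = h t * ⟪y, v⟫ := by
      intro y v
      rw [(hfdAt y).fderiv]
      simp
      ring
    -- gradient
    have hgrad : gradient (fun x : EuclideanSpace ℝ (Fin d) => (1 / 2) * h t * ‖x‖ ^ 2 + C₀ * ∫ s in t..T, h s) x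
        = h t • x := by
      apply HasGradientAt.gradient
      rw [hasGradientAt_iff_hasFDerivAt]
      refine (hfdAt x).congr_fderiv ?_
      ext y
      simp [real_inner_smul_left]
      ring
    -- Hessian entries
    have hhess : ∀ i j : Fin d,
        (fderiv ℝ (fun y : EuclideanSpace ℝ (Fin d) => fderiv ℝ
            (fun x : EuclideanSpace ℝ (Fin d) => (1 / 2) * h t * ‖x‖ ^ 2 + C₀ * ∫ s in t..T, h s) y
            (EuclideanSpace.single j 1)) x) (EuclideanSpace.single i 1)
          = h t * ⟪(EuclideanSpace.single i (1:ℝ) : EuclideanSpace ℝ (Fin d)), EuclideanSpace.single j 1⟫ := by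
      intro i j
      have heq : (fun y : EuclideanSpace ℝ (Fin d) => fderiv ℝ
            (fun x : EuclideanSpace ℝ (Fin d) => (1 / 2) * h t * ‖x‖ ^ 2 + C₀ * ∫ s in t..T, h s) y
            (EuclideanSpace.single j 1))
          = ⇑((h t) • innerSL ℝ (EuclideanSpace.single j (1:ℝ) : EuclideanSpace ℝ (Fin d))) := by
        funext y
        rw [hfd]
        simp [real_inner_comm, EuclideanSpace.inner_single_right]
      rw [heq, ContinuousLinearMap.fderiv]
      simp [real_inner_comm, EuclideanSpace.inner_single_left, EuclideanSpace.inner_single_right,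
        EuclideanSpace.single_apply, mul_ite]
      exact if_congr eq_comm rfl rfl
    -- time derivative
    have hcont := hC1.continuous
    have hintder : HasDerivAt (fun s => C₀ * ∫ u in s..T, h u) (-(C₀ * h t)) t := by
      have h1 : HasDerivAt (fun s => ∫ u in T..s, h u) (h t) t :=
        intervalIntegral.integral_hasDerivAt_right (hcont.intervalIntegrable T t)
          (hcont.stronglyMeasurableAtFilter _ _) hcont.continuousAt
      have h2 : (fun s => C₀ * ∫ u in s..T, h u) = fun s => -C₀ * ∫ u in T..s, h u := by
        funext s; rw [intervalIntegral.integral_symm]; ring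
      rw [h2]
      simpa using h1.const_mul (-C₀)
    have hder : HasDerivAt (fun s => (1 / 2) * h s * ‖x‖ ^ 2 + C₀ * ∫ u in s..T, h u)
        ((1/2) * (h t ^ 2 / (2 * c₁ + h t * ζ * Λ₂)) * ‖x‖ ^ 2 + -(C₀ * h t)) t :=
      (((hODE t htIcc).const_mul (1/2)).mul_const (‖x‖ ^ 2)).add hintder
    -- infimum
    set k : ℝ := c₁ + Λ₂ * (h t * ζ / 2) with hkdef
    have hk : 0 < k := by positivity
    set b : EuclideanSpace ℝ (Fin d) := (h t / (2 * k)) • x with hbdef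
    set m : ℝ := Λ₁ * (h t * ζ / 2) - k * ‖b‖ ^ 2 with hmdef
    have hb2 : ‖b‖ ^ 2 = (h t / (2 * k)) ^ 2 * ‖x‖ ^ 2 := by
      rw [hbdef, norm_smul, mul_pow, Real.norm_eq_abs, sq_abs]
    have hterms : ∀ a : EuclideanSpace ℝ (Fin d),
        c₁ * ‖a‖ ^ 2 + (Λ₁ + Λ₂ * ‖a‖ ^ 2) * (h t * ζ / 2) + ⟪a, h t • x⟫
          = k * ‖a + b‖ ^ 2 + m := by
      intro a
      have hnorm : ‖a + b‖ ^ 2 = ‖a‖ ^ 2 + 2 * ⟪a, b⟫ + ‖b‖ ^ 2 := norm_add_sq_real a b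
      have h1 : ⟪a, b⟫ = (h t / (2 * k)) * ⟪a, x⟫ := real_inner_smul_right a x _
      have h2 : ⟪a, h t • x⟫ = h t * ⟪a, x⟫ := real_inner_smul_right a x _
      rw [hnorm, h1, h2, hmdef, hkdef]
      field_simp
      ring
    have hinf : (⨅ a : EuclideanSpace ℝ (Fin d), (c₁ * ‖a‖ ^ 2 + (Λ₁ + Λ₂ * ‖a‖ ^ 2) * (h t * ζ / 2)
        + ⟪a, h t • x⟫)) = m := by
      rw [iInf_congr hterms]
      exact inf_quad_aux k m hk b
    -- put it together
    rw [hder.deriv, hgrad, hinf]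
    simp only [hhess]
    have hsum : ∑ i : Fin d, ∑ j : Fin d, (Sig * Sig.transpose) i j *
        (h t * ⟪(EuclideanSpace.single i (1:ℝ) : EuclideanSpace ℝ (Fin d)), EuclideanSpace.single j 1⟫) = h t * tr := by
      simp [EuclideanSpace.inner_single_left, EuclideanSpace.single_apply, htr, Matrix.trace,
        Matrix.diag, Finset.mul_sum, mul_comm]
    rw [hsum]
    have hD : (0:ℝ) < 2 * c₁ + h t * ζ * Λ₂ := by positivity
    rw [hmdef, hb2, hC₀, hkdef]
    field_simp
    ring
  · intro x
    simp [hterm, intervalIntegral.integral_same]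
end
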